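/- The weight 4 quasimodular form E_2² is not an eigenform: there is no sequence (λ_n)_{n≥1} of complex numbers such that T_n^{(4)}(E_2²) = λ_n · E_2² for all n ≥ 1. -/

import Mathlib

open Complex BigOperators

noncomputable section

/-- The upper half-plane ℍ, viewed as a subset of ℂ. -/
def UpperHalf : Set ℂ := {z : ℂ | 0 < z.im}

/-- The differential operator `D = (1/(2πi)) d/dz`. -/
def Dop (f : ℂ → ℂ) : ℂ → ℂ := fun z => (1 / (2 * (Real.pi : ℂ) * I)) * deriv f z

/-- The `n`-th Hecke operator in weight `k`:
`(T_n^{(k)} f)(z) = n^{k-1} Σ_{d|n} d^{-k} Σ_{b=0}^{d-1} f((nz + bd)/d²)`. -/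
def hecke (k : ℤ) (n : ℕ) (f : ℂ → ℂ) : ℂ → ℂ := fun z =>
  (n : ℂ) ^ (k - 1) * ∑ d ∈ n.divisors, (d : ℂ) ^ (-k) *
    ∑ b ∈ Finset.range d, f (((n : ℂ) * z + (b : ℂ) * (d : ℂ)) / ((d : ℂ) ^ 2))

/-- `σ_k(m) = Σ_{d|m} d^k`. -/
def sigmaFn (k m : ℕ) : ℕ := ∑ d ∈ m.divisors, d ^ k

/-- The Eisenstein series `E_k(z) = 1 − (2k/B_k) Σ_{m≥1} σ_{k−1}(m) q^m`, `q = e^{2πiz}`. -/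
def Eis (k : ℕ) : ℂ → ℂ := fun z =>
  1 - (2 * (k : ℂ) / ((bernoulli k : ℚ) : ℂ)) *
    ∑' m : ℕ, ((sigmaFn (k - 1) (m + 1) : ℕ) : ℂ) *
      Complex.exp (2 * (Real.pi : ℂ) * I * z) ^ (m + 1)

/-- The nearly holomorphic Eisenstein series `E_2*(z) = E_2(z) − 3/(π Im z)`. -/
def E2star : ℂ → ℂ := fun z => Eis 2 z - 3 / ((Real.pi : ℂ) * (z.im : ℂ))

/-- `Δ_12 = (E_4³ − E_6²)/1728`, the discriminant cusp form of weight 12. -/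
def Delta12 : ℂ → ℂ := fun z => (Eis 4 z ^ 3 - Eis 6 z ^ 2) / 1728

/-- `Δ_16`, the unique normalized cusp form of weight 16 (equal to `E_4 Δ_12`). -/
def Delta16 : ℂ → ℂ := fun z => Eis 4 z * Delta12 z

/-- `Δ_18`, the unique normalized cusp form of weight 18 (equal to `E_6 Δ_12`). -/
def Delta18 : ℂ → ℂ := fun z => Eis 6 z * Delta12 z

/-- `Δ_20`, the unique normalized cusp form of weight 20 (equal to `E_8 Δ_12`). -/
def Delta20 : ℂ → ℂ := fun z => Eis 8 z * Delta12 z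

/-- `Δ_22`, the unique normalized cusp form of weight 22 (equal to `E_10 Δ_12`). -/
def Delta22 : ℂ → ℂ := fun z => Eis 10 z * Delta12 z

/-- `Δ_26`, the unique normalized cusp form of weight 26 (equal to `E_14 Δ_12`). -/
def Delta26 : ℂ → ℂ := fun z => Eis 14 z * Delta12 z

/-- A quasimodular form of weight `k` on `SL₂(ℤ)`: a ℂ-linear combination of monomials
`E_2^a E_4^b E_6^c` with `2a + 4b + 6c = k` (as a function on the upper half-plane). -/
def IsQuasimodular (k : ℕ) (f : ℂ → ℂ) : Prop :=
  ∃ (S : Finset (ℕ × ℕ × ℕ)) (c : ℕ × ℕ × ℕ → ℂ),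
    (∀ t ∈ S, 2 * t.1 + 4 * t.2.1 + 6 * t.2.2 = k) ∧
    ∀ z ∈ UpperHalf,
      f z = ∑ t ∈ S, c t * Eis 2 z ^ t.1 * Eis 4 z ^ t.2.1 * Eis 6 z ^ t.2.2

/-- A quasimodular form of weight `k` and depth `≤ p`: a ℂ-linear combination of monomials
`E_2^a E_4^b E_6^c` with `2a + 4b + 6c = k` and `a ≤ p`. -/
def IsQuasimodularDepth (k p : ℕ) (f : ℂ → ℂ) : Prop :=
  ∃ (S : Finset (ℕ × ℕ × ℕ)) (c : ℕ × ℕ × ℕ → ℂ),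
    (∀ t ∈ S, 2 * t.1 + 4 * t.2.1 + 6 * t.2.2 = k ∧ t.1 ≤ p) ∧
    ∀ z ∈ UpperHalf,
      f z = ∑ t ∈ S, c t * Eis 2 z ^ t.1 * Eis 4 z ^ t.2.1 * Eis 6 z ^ t.2.2

/-- `f` satisfies the Hecke eigenform equations of weight `k` on ℍ: for every `n ≥ 1`
there is `λ_n ∈ ℂ` with `T_n^{(k)} f = λ_n f` on the upper half-plane. -/
def IsEigenOn (k : ℤ) (f : ℂ → ℂ) : Prop :=
  ∀ n : ℕ, 1 ≤ n → ∃ c : ℂ, ∀ z ∈ UpperHalf, hecke k n f z = c * f z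

/-- An eigenform of weight `k`: a function that is nonzero on ℍ and satisfies the Hecke
eigenform equations of weight `k`. -/
def IsEigenform (k : ℤ) (f : ℂ → ℂ) : Prop :=
  (∃ z ∈ UpperHalf, f z ≠ 0) ∧ IsEigenOn k f

/-- A holomorphic modular form of weight `k` on `SL₂(ℤ)`: holomorphic on ℍ, satisfying the
weight-`k` modular transformation law, and bounded as `Im z → ∞`. -/
def IsModularForm (k : ℤ) (f : ℂ → ℂ) : Prop :=
  DifferentiableOn ℂ f UpperHalf ∧
  (∀ a b c d : ℤ, a * d - b * c = 1 → ∀ z ∈ UpperHalf,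
      f (((a : ℂ) * z + (b : ℂ)) / ((c : ℂ) * z + (d : ℂ))) =
        ((c : ℂ) * z + (d : ℂ)) ^ k * f z) ∧
  ∃ C : ℝ, ∀ z ∈ UpperHalf, 1 ≤ z.im → ‖f z‖ ≤ C

/-- `f` is a nonzero scalar multiple of `F` (as functions on the upper half-plane). -/
def ScalarOf (f F : ℂ → ℂ) : Prop := ∃ c : ℂ, c ≠ 0 ∧ ∀ z ∈ UpperHalf, f z = c * F z

/-- The unordered pair `{f, g}` equals `{F, G}` up to nonzero scalar multiples. -/
def UPair (f g F G : ℂ → ℂ) : Prop :=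
  (ScalarOf f F ∧ ScalarOf g G) ∨ (ScalarOf f G ∧ ScalarOf g F)

namespace RC11aux

lemma sig_le (m : ℕ) : sigmaFn 1 m ≤ 4 ^ m := by
  have hcard : m.divisors.card ≤ m := by
    have hsub : m.divisors ⊆ Finset.Icc 1 m := by
      intro d hd
      rw [Finset.mem_Icc]
      exact ⟨Nat.pos_of_mem_divisors hd, Nat.divisor_le hd⟩
    simpa using Finset.card_le_card hsub
  calc sigmaFn 1 m ≤ ∑ d ∈ m.divisors, m := by
        unfold sigmaFn
        exact Finset.sum_le_sum fun d hd => by simpa using Nat.divisor_le hd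
    _ = m.divisors.card * m := by rw [Finset.sum_const, smul_eq_mul]
    _ ≤ m * m := Nat.mul_le_mul_right m hcard
    _ ≤ 2 ^ m * 2 ^ m := Nat.mul_le_mul (Nat.le_of_lt (Nat.lt_two_pow_self (n := m))) (Nat.le_of_lt (Nat.lt_two_pow_self (n := m)))
    _ = 4 ^ m := by rw [← Nat.mul_pow]

noncomputable def P (u : ℂ) : ℂ := ∑' m : ℕ, ((sigmaFn 1 (m + 1) : ℕ) : ℂ) * u ^ (m + 1)

lemma term_norm (u : ℂ) (m : ℕ) :
    ‖((sigmaFn 1 (m + 1) : ℕ) : ℂ) * u ^ (m + 1)‖ ≤ (4 * ‖u‖) ^ (m + 1) := by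
  rw [norm_mul, norm_pow, Complex.norm_natCast, mul_pow]
  have h : ((sigmaFn 1 (m + 1) : ℕ) : ℝ) ≤ (4 : ℝ) ^ (m + 1) := by
    exact_mod_cast sig_le (m + 1)
  have h2 : (0:ℝ) ≤ ‖u‖ ^ (m+1) := by positivity
  exact mul_le_mul_of_nonneg_right h h2

lemma summ (u : ℂ) (hu : ‖u‖ ≤ 1 / 8) :
    Summable (fun m : ℕ => ((sigmaFn 1 (m + 1) : ℕ) : ℂ) * u ^ (m + 1)) := by
  apply Summable.of_norm
  have hgeo : Summable (fun m : ℕ => ((1:ℝ)/2) ^ m) :=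
    summable_geometric_of_lt_one (by norm_num) (by norm_num)
  have hgeo' : Summable (fun m : ℕ => ((1:ℝ)/2) ^ (m + 1)) :=
    (summable_nat_add_iff 1).2 hgeo
  apply Summable.of_nonneg_of_le (fun m => norm_nonneg _) (fun m => ?_) hgeo'
  refine (term_norm u m).trans ?_
  apply pow_le_pow_left₀ (by positivity)
  nlinarith [norm_nonneg u]

lemma P_approx (u : ℂ) (hu : ‖u‖ ≤ 1 / 8) : ‖P u - u - 3 * u ^ 2‖ ≤ 128 * ‖u‖ ^ 3 := by
  have hs := summ u hu
  have h2 := Summable.sum_add_tsum_nat_add 2 hs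
  have hσ1 : sigmaFn 1 1 = 1 := by decide
  have hσ2 : sigmaFn 1 2 = 3 := by decide
  have hsum2 : ∑ i ∈ Finset.range 2, ((sigmaFn 1 (i + 1) : ℕ) : ℂ) * u ^ (i + 1)
      = u + 3 * u ^ 2 := by
    simp [Finset.sum_range_succ, hσ1, hσ2]
  have hPu : P u - u - 3 * u ^ 2 = ∑' i : ℕ, ((sigmaFn 1 (i + 2 + 1) : ℕ) : ℂ) * u ^ (i + 2 + 1) := by
    rw [P, ← h2, hsum2]; ring
  rw [hPu]
  have hg : Summable (fun i : ℕ => (4 * ‖u‖) ^ 3 * ((1:ℝ)/2) ^ i) := by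
    exact (summable_geometric_of_lt_one (by norm_num) (by norm_num)).mul_left _
  have hb : ∀ i : ℕ, ‖((sigmaFn 1 (i + 2 + 1) : ℕ) : ℂ) * u ^ (i + 2 + 1)‖
      ≤ (4 * ‖u‖) ^ 3 * ((1:ℝ)/2) ^ i := by
    intro i
    refine (term_norm u (i + 2)).trans ?_
    have h4u : 0 ≤ 4 * ‖u‖ := by positivity
    have h4u2 : 4 * ‖u‖ ≤ 1/2 := by nlinarith [norm_nonneg u]
    calc (4 * ‖u‖) ^ (i + 2 + 1) = (4 * ‖u‖) ^ 3 * (4 * ‖u‖) ^ i := by ring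
      _ ≤ (4 * ‖u‖) ^ 3 * ((1:ℝ)/2) ^ i := by
          apply mul_le_mul_of_nonneg_left (pow_le_pow_left₀ h4u h4u2 i) (by positivity)
  have hns : Summable (fun i : ℕ => ‖((sigmaFn 1 (i + 2 + 1) : ℕ) : ℂ) * u ^ (i + 2 + 1)‖) :=
    Summable.of_nonneg_of_le (fun _ => norm_nonneg _) hb hg
  calc ‖∑' i : ℕ, ((sigmaFn 1 (i + 2 + 1) : ℕ) : ℂ) * u ^ (i + 2 + 1)‖
      ≤ ∑' i : ℕ, ‖((sigmaFn 1 (i + 2 + 1) : ℕ) : ℂ) * u ^ (i + 2 + 1)‖ :=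
        norm_tsum_le_tsum_norm hns
    _ ≤ ∑' i : ℕ, (4 * ‖u‖) ^ 3 * ((1:ℝ)/2) ^ i := Summable.tsum_le_tsum hb hns hg
    _ = (4 * ‖u‖) ^ 3 * (1 - 1/2)⁻¹ := by
        rw [tsum_mul_left, tsum_geometric_of_lt_one (by norm_num) (by norm_num)]
    _ ≤ 128 * ‖u‖ ^ 3 := by nlinarith [norm_nonneg u]

lemma P_bound (u : ℂ) (hu : ‖u‖ ≤ 1 / 8) : ‖P u‖ ≤ 4 * ‖u‖ := by
  have h := P_approx u hu
  have h2 : ‖P u‖ ≤ ‖P u - u - 3 * u ^ 2‖ + ‖u‖ + 3 * ‖u‖ ^ 2 := by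
    calc ‖P u‖ = ‖(P u - u - 3*u^2) + u + 3*u^2‖ := by ring_nf
      _ ≤ ‖P u - u - 3*u^2‖ + ‖u‖ + ‖3*u^2‖ := norm_add₃_le
      _ = ‖P u - u - 3*u^2‖ + ‖u‖ + 3*‖u‖^2 := by
          rw [norm_mul, norm_pow]; norm_num
  nlinarith [norm_nonneg u]


noncomputable def Efn (u : ℂ) : ℂ := 1 - 24 * P u
noncomputable def G (u : ℂ) : ℂ := Efn u * Efn u
noncomputable def A (u : ℂ) : ℂ := G u - (1 - 48 * u + 432 * u ^ 2)

lemma Eis2_eq (z : ℂ) : Eis 2 z = Efn (Complex.exp (2 * (Real.pi : ℂ) * I * z)) := by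
  have hb : ((bernoulli 2 : ℚ) : ℂ) = 1 / 6 := by
    rw [bernoulli_eq_bernoulli'_of_ne_one (by norm_num), bernoulli'_two]
    norm_num
  unfold Eis Efn P
  rw [hb]
  norm_num

lemma A_bound (u : ℂ) (hu : ‖u‖ ≤ 1 / 8) : ‖A u‖ ≤ 100000 * ‖u‖ ^ 3 := by
  have h1 := P_approx u hu
  have h2 := P_bound u hu
  have hA : A u = -48 * (P u - u - 3 * u ^ 2) + 576 * ((P u - u) * (P u + u)) := by
    unfold A G Efn; ring
  have hPu : ‖P u - u‖ ≤ ‖P u - u - 3 * u ^ 2‖ + 3 * ‖u‖ ^ 2 := by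
    calc ‖P u - u‖ = ‖(P u - u - 3 * u ^ 2) + 3 * u ^ 2‖ := by ring_nf
      _ ≤ ‖P u - u - 3 * u ^ 2‖ + ‖3 * u ^ 2‖ := norm_add_le _ _
      _ = ‖P u - u - 3 * u ^ 2‖ + 3 * ‖u‖ ^ 2 := by rw [norm_mul, norm_pow]; norm_num
  have hPp : ‖P u + u‖ ≤ 5 * ‖u‖ := by
    calc ‖P u + u‖ ≤ ‖P u‖ + ‖u‖ := norm_add_le _ _
      _ ≤ 5 * ‖u‖ := by linarith
  calc ‖A u‖ ≤ ‖-48 * (P u - u - 3 * u ^ 2)‖ + ‖576 * ((P u - u) * (P u + u))‖ := by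
        rw [hA]; exact norm_add_le _ _
    _ = 48 * ‖P u - u - 3 * u ^ 2‖ + 576 * (‖P u - u‖ * ‖P u + u‖) := by
        rw [norm_mul, norm_mul, norm_mul]; norm_num
    _ ≤ 100000 * ‖u‖ ^ 3 := by nlinarith [norm_nonneg u, norm_nonneg (P u - u), norm_nonneg (P u + u), norm_nonneg (P u - u - 3 * u ^ 2)]

lemma G1_bound (u : ℂ) (hu : ‖u‖ ≤ 1 / 8) : ‖G u - 1‖ ≤ 2000 * ‖u‖ := by
  have h := A_bound u hu
  have hid : G u - 1 = A u + (-48 * u + 432 * u ^ 2) := by unfold A; ring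
  calc ‖G u - 1‖ ≤ ‖A u‖ + ‖-48 * u + 432 * u ^ 2‖ := by rw [hid]; exact norm_add_le _ _
    _ ≤ ‖A u‖ + 48 * ‖u‖ + 432 * ‖u‖ ^ 2 := by
        have : ‖-48 * u + 432 * u ^ 2‖ ≤ ‖-48 * u‖ + ‖432 * u ^ 2‖ := norm_add_le _ _
        rw [norm_mul, norm_mul, norm_pow] at this
        simp only [norm_neg] at this
        norm_num at this ⊢
        linarith
    _ ≤ 2000 * ‖u‖ := by nlinarith [norm_nonneg u]


lemma hecke_two (f : ℂ → ℂ) (z : ℂ) :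
    hecke 4 2 f z = 8 * f (2 * z) + (1 / 2) * f (z / 2) + (1 / 2) * f ((z + 1) / 2) := by
  have hdiv : Nat.divisors 2 = {1, 2} := by decide
  unfold hecke
  rw [hdiv]
  rw [Finset.sum_insert (by decide), Finset.sum_singleton]
  have e1 : (((2:ℕ):ℂ) * z + ((0:ℕ):ℂ) * ((1:ℕ):ℂ)) / ((1:ℕ):ℂ) ^ 2 = 2 * z := by
    push_cast; ring
  have e2 : (((2:ℕ):ℂ) * z + ((0:ℕ):ℂ) * ((2:ℕ):ℂ)) / ((2:ℕ):ℂ) ^ 2 = z / 2 := by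
    push_cast; ring
  have e3 : (((2:ℕ):ℂ) * z + ((1:ℕ):ℂ) * ((2:ℕ):ℂ)) / ((2:ℕ):ℂ) ^ 2 = (z + 1) / 2 := by
    push_cast; ring
  simp only [Finset.sum_range_succ, Finset.sum_range_zero, e1, e2, e3]
  have h1 : ((1:ℕ):ℂ) ^ (-(4:ℤ)) = 1 := by norm_num
  have h2 : ((2:ℕ):ℂ) ^ (-(4:ℤ)) = 1 / 16 := by
    push_cast
    rw [zpow_neg]
    norm_num
  have h3 : ((2:ℕ):ℂ) ^ ((4:ℤ) - 1) = 8 := by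
    push_cast
    norm_num
  rw [h1, h2, h3]
  ring

lemma exp_I_mul (t : ℝ) :
    Complex.exp (2 * (Real.pi : ℂ) * I * (I * (t:ℂ))) = ((Real.exp (-(Real.pi * t)) : ℝ) : ℂ) ^ 2 := by
  have harg : 2 * (Real.pi : ℂ) * I * (I * (t:ℂ)) = ((-(2 * Real.pi * t) : ℝ) : ℂ) := by
    push_cast
    linear_combination (2 * (Real.pi:ℂ) * (t:ℂ)) * Complex.I_sq
  rw [harg, ← Complex.ofReal_exp]
  rw [show -(2 * Real.pi * t) = (2:ℕ) * (-(Real.pi * t)) by push_cast; ring, Real.exp_nat_mul]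
  push_cast
  ring

lemma exp_two_I_mul (t : ℝ) :
    Complex.exp (2 * (Real.pi : ℂ) * I * (2 * (I * (t:ℂ)))) = ((Real.exp (-(Real.pi * t)) : ℝ) : ℂ) ^ 4 := by
  have harg : 2 * (Real.pi : ℂ) * I * (2 * (I * (t:ℂ))) = ((-(4 * Real.pi * t) : ℝ) : ℂ) := by
    push_cast
    linear_combination (4 * (Real.pi:ℂ) * (t:ℂ)) * Complex.I_sq
  rw [harg, ← Complex.ofReal_exp]
  rw [show -(4 * Real.pi * t) = (4:ℕ) * (-(Real.pi * t)) by push_cast; ring, Real.exp_nat_mul]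
  push_cast
  ring

lemma exp_half_I_mul (t : ℝ) :
    Complex.exp (2 * (Real.pi : ℂ) * I * ((I * (t:ℂ)) / 2)) = ((Real.exp (-(Real.pi * t)) : ℝ) : ℂ) := by
  have harg : 2 * (Real.pi : ℂ) * I * ((I * (t:ℂ)) / 2) = ((-(Real.pi * t) : ℝ) : ℂ) := by
    push_cast
    linear_combination ((Real.pi:ℂ) * (t:ℂ)) * Complex.I_sq
  rw [harg, ← Complex.ofReal_exp]

lemma exp_half_shift (t : ℝ) :
    Complex.exp (2 * (Real.pi : ℂ) * I * ((I * (t:ℂ) + 1) / 2)) = -((Real.exp (-(Real.pi * t)) : ℝ) : ℂ) := by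
  have harg : 2 * (Real.pi : ℂ) * I * ((I * (t:ℂ) + 1) / 2)
      = ((-(Real.pi * t) : ℝ) : ℂ) + (Real.pi : ℂ) * I := by
    push_cast
    linear_combination ((Real.pi:ℂ) * (t:ℂ)) * Complex.I_sq
  rw [harg, Complex.exp_add, Complex.exp_pi_mul_I, ← Complex.ofReal_exp]
  ring

end RC11aux

open RC11aux Filter Topology

theorem rankin_cohen_stmt11 :
    ¬ ∃ lam : ℕ → ℂ, ∀ n : ℕ, 1 ≤ n → ∀ z ∈ UpperHalf,
      hecke 4 n (fun w => Eis 2 w * Eis 2 w) z = lam n * (Eis 2 z * Eis 2 z) := by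
  rintro ⟨lam, hlam⟩
  -- the key pointwise identity along the imaginary axis
  have key : ∀ t : ℝ, 0 < t →
      8 * G (((Real.exp (-(Real.pi * t)) : ℝ) : ℂ) ^ 4)
        + (1 / 2) * G ((Real.exp (-(Real.pi * t)) : ℝ) : ℂ)
        + (1 / 2) * G (-((Real.exp (-(Real.pi * t)) : ℝ) : ℂ))
      = lam 2 * G (((Real.exp (-(Real.pi * t)) : ℝ) : ℂ) ^ 2) := by
    intro t ht
    have hz : (I * (t:ℂ)) ∈ UpperHalf := by
      simp only [UpperHalf, Set.mem_setOf_eq, Complex.mul_im, Complex.I_re, Complex.I_im,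
        Complex.ofReal_re, Complex.ofReal_im]
      simpa using ht
    have h := hlam 2 (by norm_num) (I * (t:ℂ)) hz
    rw [hecke_two] at h
    simp only [Eis2_eq, exp_I_mul, exp_two_I_mul, exp_half_I_mul, exp_half_shift] at h
    simpa only [G] using h
  -- abbreviation
  set c := lam 2 with hc
  -- step 1 : c = 9
  have hsmall : ∀ t : ℝ, 1 ≤ t → Real.exp (-(Real.pi * t)) ≤ 1 / 8 := by
    intro t ht
    have h3 : (3:ℝ) ≤ Real.pi * t := by
      nlinarith [Real.pi_gt_three]
    have hmono : Real.exp (-(Real.pi * t)) ≤ Real.exp (-3) :=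
      Real.exp_le_exp.2 (by linarith)
    have he1 : (2:ℝ) ≤ Real.exp 1 := by nlinarith [Real.exp_one_gt_d9]
    have he3 : (8:ℝ) ≤ Real.exp 3 := by
      rw [show (3:ℝ) = (3:ℕ) * (1:ℝ) by norm_num, Real.exp_nat_mul]
      calc (8:ℝ) = 2 ^ (3:ℕ) := by norm_num
        _ ≤ Real.exp 1 ^ (3:ℕ) := pow_le_pow_left₀ (by norm_num) he1 3
    have hinv : Real.exp (-3) ≤ 1/8 := by
      rw [Real.exp_neg]
      have := inv_anti₀ (show (0:ℝ) < 8 by norm_num) he3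
      simpa using this
    linarith
  have hbound : ∀ t : ℝ, 1 ≤ t →
      ‖c - 9‖ ≤ (2000 * ‖c‖ + 18000) * Real.exp (-(Real.pi * t)) := by
    intro t ht
    have ht0 : (0:ℝ) < t := by linarith
    have hk := key t ht0
    set s : ℝ := Real.exp (-(Real.pi * t)) with hs
    have hs0 : 0 < s := Real.exp_pos _
    have hs8 : s ≤ 1/8 := hsmall t ht
    set u : ℂ := ((s : ℝ) : ℂ) with hu
    have hnu : ‖u‖ = s := by
      rw [hu, Complex.norm_real, Real.norm_eq_abs, abs_of_pos hs0]
    have hn2 : ‖u ^ 2‖ = s ^ 2 := by rw [norm_pow, hnu]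
    have hn4 : ‖u ^ 4‖ = s ^ 4 := by rw [norm_pow, hnu]
    have hnn : ‖-u‖ = s := by rw [norm_neg, hnu]
    have hs1 : s ≤ 1 := by linarith
    have hpow : ∀ n : ℕ, 1 ≤ n → s ^ n ≤ s := by
      intro n hn
      calc s ^ n ≤ s ^ 1 := pow_le_pow_of_le_one hs0.le hs1 hn
        _ = s := pow_one s
    have hid : c - 9 = 8 * (G (u ^ 4) - 1) + (1/2) * (G u - 1) + (1/2) * (G (-u) - 1)
        - c * (G (u ^ 2) - 1) := by
      linear_combination -hk
    have b1 : ‖G (u ^ 4) - 1‖ ≤ 2000 * s ^ 4 := by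
      have := G1_bound (u ^ 4) (by rw [hn4]; linarith [hpow 4 (by norm_num)])
      rwa [hn4] at this
    have b2 : ‖G u - 1‖ ≤ 2000 * s := by
      have := G1_bound u (by rw [hnu]; exact hs8)
      rwa [hnu] at this
    have b3 : ‖G (-u) - 1‖ ≤ 2000 * s := by
      have := G1_bound (-u) (by rw [hnn]; exact hs8)
      rwa [hnn] at this
    have b4 : ‖G (u ^ 2) - 1‖ ≤ 2000 * s ^ 2 := by
      have := G1_bound (u ^ 2) (by rw [hn2]; linarith [hpow 2 (by norm_num)])
      rwa [hn2] at this
    calc ‖c - 9‖ ≤ 8 * ‖G (u ^ 4) - 1‖ + (1/2) * ‖G u - 1‖ + (1/2) * ‖G (-u) - 1‖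
          + ‖c‖ * ‖G (u ^ 2) - 1‖ := by
          rw [hid]
          refine le_trans (norm_sub_le _ _) ?_
          have h3le := norm_add₃_le (a := 8 * (G (u ^ 4) - 1)) (b := (1/2) * (G u - 1))
            (c := (1/2) * (G (-u) - 1))
          simp only [norm_mul] at h3le ⊢
          norm_num at h3le ⊢
          linarith
      _ ≤ (2000 * ‖c‖ + 18000) * s := by
          have p2 := hpow 2 (by norm_num)
          have p4 := hpow 4 (by norm_num)
          nlinarith [norm_nonneg c, hs0.le,
            mul_le_mul_of_nonneg_left p2 (norm_nonneg c)]
  have hc9 : c = 9 := by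
    have htend : Tendsto (fun t : ℝ => (2000 * ‖c‖ + 18000) * Real.exp (-(Real.pi * t)))
        atTop (𝓝 0) := by
      have h1 : Tendsto (fun t : ℝ => Real.pi * t) atTop atTop :=
        Tendsto.const_mul_atTop Real.pi_pos tendsto_id
      have h2 : Tendsto (fun t : ℝ => Real.exp (-(Real.pi * t))) atTop (𝓝 0) :=
        Real.tendsto_exp_atBot.comp (tendsto_neg_atBot_iff.2 h1)
      simpa using h2.const_mul (2000 * ‖c‖ + 18000)
    have hle : ‖c - 9‖ ≤ 0 :=
      ge_of_tendsto htend (eventually_atTop.2 ⟨1, hbound⟩)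
    exact sub_eq_zero.1 (norm_le_zero_iff.1 hle)
  -- step 2 : contradiction at t = 4
  have hk := key 4 (by norm_num)
  rw [hc9] at hk
  set s : ℝ := Real.exp (-(Real.pi * 4)) with hs
  have hs0 : 0 < s := Real.exp_pos _
  have hstiny : s ≤ 1 / 150000 := by
    have h12 : (12:ℝ) ≤ Real.pi * 4 := by nlinarith [Real.pi_gt_three]
    have hmono : s ≤ Real.exp (-12) := Real.exp_le_exp.2 (by linarith)
    have he12 : (150000:ℝ) ≤ Real.exp 12 := by
      rw [show (12:ℝ) = (12:ℕ) * (1:ℝ) by norm_num, Real.exp_nat_mul]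
      calc (150000:ℝ) ≤ 2.7182818283 ^ (12:ℕ) := by norm_num
        _ ≤ Real.exp 1 ^ (12:ℕ) := pow_le_pow_left₀ (by norm_num) Real.exp_one_gt_d9.le 12
    have hinv : Real.exp (-12) ≤ 1/150000 := by
      rw [Real.exp_neg]
      have := inv_anti₀ (show (0:ℝ) < 150000 by norm_num) he12
      simpa using this
    linarith
  have hs8 : s ≤ 1/8 := by linarith
  have hs1 : s ≤ 1 := by linarith
  set u : ℂ := ((s:ℝ):ℂ) with hu
  have hnu : ‖u‖ = s := by rw [hu, Complex.norm_real, Real.norm_eq_abs, abs_of_pos hs0]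
  have hpows : ∀ n : ℕ, 3 ≤ n → s ^ n ≤ s ^ 3 := fun n hn =>
    pow_le_pow_of_le_one hs0.le hs1 hn
  have hpow1 : ∀ n : ℕ, 1 ≤ n → s ^ n ≤ s := by
    intro n hn
    calc s ^ n ≤ s ^ 1 := pow_le_pow_of_le_one hs0.le hs1 hn
      _ = s := pow_one s
  have hid2 : (864:ℂ) * u ^ 2
      = 4272 * u ^ 4 - 3456 * u ^ 8 + 9 * A (u ^ 2) - 8 * A (u ^ 4)
        - (1/2) * A u - (1/2) * A (-u) := by
    simp only [A]
    linear_combination hk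
  have hA2 : ‖A (u ^ 2)‖ ≤ 100000 * (s ^ 2) ^ 3 := by
    have := A_bound (u ^ 2) (by rw [norm_pow, hnu]; linarith [hpow1 2 (by norm_num)])
    rwa [norm_pow, hnu] at this
  have hA4 : ‖A (u ^ 4)‖ ≤ 100000 * (s ^ 4) ^ 3 := by
    have := A_bound (u ^ 4) (by rw [norm_pow, hnu]; linarith [hpow1 4 (by norm_num)])
    rwa [norm_pow, hnu] at this
  have hA1 : ‖A u‖ ≤ 100000 * s ^ 3 := by
    have := A_bound u (by rw [hnu]; exact hs8)
    rwa [hnu] at this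
  have hAm : ‖A (-u)‖ ≤ 100000 * s ^ 3 := by
    have := A_bound (-u) (by rw [norm_neg, hnu]; exact hs8)
    rwa [norm_neg, hnu] at this
  have hLHS : ‖(864:ℂ) * u ^ 2‖ = 864 * s ^ 2 := by
    rw [norm_mul, norm_pow, hnu]; norm_num
  have tri : ‖(4272:ℂ) * u ^ 4 - 3456 * u ^ 8 + 9 * A (u ^ 2) - 8 * A (u ^ 4)
        - (1/2) * A u - (1/2) * A (-u)‖
      ≤ 4272 * s ^ 4 + 3456 * s ^ 8 + 9 * ‖A (u ^ 2)‖ + 8 * ‖A (u ^ 4)‖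
        + (1/2) * ‖A u‖ + (1/2) * ‖A (-u)‖ := by
    have n1 : ‖(4272:ℂ) * u ^ 4‖ = 4272 * s ^ 4 := by
      rw [norm_mul, norm_pow, hnu]; norm_num
    have n2 : ‖(3456:ℂ) * u ^ 8‖ = 3456 * s ^ 8 := by
      rw [norm_mul, norm_pow, hnu]; norm_num
    calc ‖(4272:ℂ) * u ^ 4 - 3456 * u ^ 8 + 9 * A (u ^ 2) - 8 * A (u ^ 4)
          - (1/2) * A u - (1/2) * A (-u)‖
        ≤ ‖(4272:ℂ) * u ^ 4 - 3456 * u ^ 8 + 9 * A (u ^ 2) - 8 * A (u ^ 4)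
          - (1/2) * A u‖ + ‖(1/2:ℂ) * A (-u)‖ := norm_sub_le _ _
      _ ≤ (‖(4272:ℂ) * u ^ 4 - 3456 * u ^ 8 + 9 * A (u ^ 2) - 8 * A (u ^ 4)‖
          + ‖(1/2:ℂ) * A u‖) + ‖(1/2:ℂ) * A (-u)‖ := by
          gcongr
          exact norm_sub_le _ _
      _ ≤ ((‖(4272:ℂ) * u ^ 4 - 3456 * u ^ 8 + 9 * A (u ^ 2)‖ + ‖(8:ℂ) * A (u ^ 4)‖)
          + ‖(1/2:ℂ) * A u‖) + ‖(1/2:ℂ) * A (-u)‖ := by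
          gcongr
          exact norm_sub_le _ _
      _ ≤ (((‖(4272:ℂ) * u ^ 4 - 3456 * u ^ 8‖ + ‖(9:ℂ) * A (u ^ 2)‖) + ‖(8:ℂ) * A (u ^ 4)‖)
          + ‖(1/2:ℂ) * A u‖) + ‖(1/2:ℂ) * A (-u)‖ := by
          gcongr
          exact norm_add_le _ _
      _ ≤ ((((‖(4272:ℂ) * u ^ 4‖ + ‖(3456:ℂ) * u ^ 8‖) + ‖(9:ℂ) * A (u ^ 2)‖) + ‖(8:ℂ) * A (u ^ 4)‖)
          + ‖(1/2:ℂ) * A u‖) + ‖(1/2:ℂ) * A (-u)‖ := by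
          gcongr
          exact norm_sub_le _ _
      _ = 4272 * s ^ 4 + 3456 * s ^ 8 + 9 * ‖A (u ^ 2)‖ + 8 * ‖A (u ^ 4)‖
          + (1/2) * ‖A u‖ + (1/2) * ‖A (-u)‖ := by
          rw [n1, n2, norm_mul, norm_mul, norm_mul, norm_mul]
          norm_num
  have hineq : 864 * s ^ 2 ≤ 1807728 * (s * s ^ 2) := by
    have h1 := hid2
    have h2 : 864 * s ^ 2 ≤ 4272 * s ^ 4 + 3456 * s ^ 8 + 9 * ‖A (u ^ 2)‖ + 8 * ‖A (u ^ 4)‖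
        + (1/2) * ‖A u‖ + (1/2) * ‖A (-u)‖ := by
      rw [← hLHS, hid2]
      exact tri
    have p4 := hpows 4 (by norm_num)
    have p8 := hpows 8 (by norm_num)
    have p6 : (s ^ 2) ^ 3 ≤ s ^ 3 := by
      rw [← pow_mul]
      exact hpows 6 (by norm_num)
    have p12 : (s ^ 4) ^ 3 ≤ s ^ 3 := by
      rw [← pow_mul]
      exact hpows 12 (by norm_num)
    have hcube : s ^ 3 = s * s ^ 2 := by ring
    nlinarith [hA2, hA4, hA1, hAm]
  have hcontra : (864:ℝ) ≤ 1807728 * (1/150000) := by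
    have hs2 : (0:ℝ) < s ^ 2 := by positivity
    have h3 : 1807728 * (s * s ^ 2) ≤ 1807728 * ((1/150000) * s ^ 2) := by
      gcongr
    nlinarith [hineq, h3, hs2]
  norm_num at hcontra
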